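/- Let χ: ℙ₁ × ℙ₂ → ℙ' be a linear map satisfying conditions (i) and (ii), γ a regular embedding, and let φ, α', α be as described below. Then every line of ℙ₂ containing two points of the basis 𝓑 is a special line. -/

import Mathlib

open Set

namespace Segre

variable {P Q : Type*}

/-- Two points are collinear w.r.t. a line set `L` if some line contains both. -/
def Collin (L : Set (Set P)) (x y : P) : Prop := ∃ g ∈ L, x ∈ g ∧ y ∈ g

/-- The union of all lines of `L` through both `x` and `y`; for distinct collinear
points of a semilinear space this is the unique line `xy`. -/
def lineThru (L : Set (Set P)) (x y : P) : Set P := ⋃ g ∈ {g ∈ L | x ∈ g ∧ y ∈ g}, g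

/-- The join `M₁ ∨ M₂` of two point sets in a (semi)linear space with line set `L`. -/
def sJoin (L : Set (Set P)) (M₁ M₂ : Set P) : Set P :=
  M₁ ∪ M₂ ∪
    ⋃ (x ∈ M₁) (y ∈ M₂) (_ : x ≠ y ∧ Collin L x y), lineThru L x y

/-- The (possibly empty) image point set `Xχ` of a single point under a partial map. -/
def ptImg (χ : P → Option Q) (X : P) : Set Q := {y | χ X = some y}

/-- The image `Mχ` of a point set under a partial map. -/
def mapSet (χ : P → Option Q) (M : Set P) : Set Q := ⋃ X ∈ M, ptImg χ X

/-- Axioms (L1) and (L2) for a linear map from the semilinear space with point set `P`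
and line set `L` into the projective space with point set `Q` and line set `L'`.
Points in the exceptional set are modelled by the value `none`. -/
def IsLinMap (L : Set (Set P)) (L' : Set (Set Q)) (χ : P → Option Q) : Prop :=
  (∀ X Y : P, Collin L X Y →
      mapSet χ (sJoin L {X} {Y}) = sJoin L' (ptImg χ X) (ptImg χ Y)) ∧
  (∀ X Y : P, Collin L X Y → X ≠ Y → ptImg χ X = ptImg χ Y →
      ∃ Z ∈ lineThru L X Y, χ Z = none)

/-- A linear map is global if its domain is everything. -/
def IsGlobal (χ : P → Option Q) : Prop := ∀ X, χ X ≠ none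

/-- The lines of the product of two semilinear spaces with line sets `L₁`, `L₂`. -/
def prodLines (L₁ : Set (Set P)) (L₂ : Set (Set Q)) : Set (Set (P × Q)) :=
  {s | (∃ X₁ : P, ∃ g₂ ∈ L₂, s = {X₁} ×ˢ g₂) ∨ ∃ g₁ ∈ L₁, ∃ X₂ : Q, s = g₁ ×ˢ {X₂}}

/-- The lines of the product of two lines `ℓ₁`, `ℓ₂` (viewed as semilinear spaces). -/
def lineProdLines (ℓ₁ : Set P) (ℓ₂ : Set Q) : Set (Set (P × Q)) :=
  {s | (∃ X ∈ ℓ₁, s = {X} ×ˢ ℓ₂) ∨ ∃ Y ∈ ℓ₂, s = ℓ₁ ×ˢ {Y}}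

/-- A collineation of a projective (or semilinear) space with line set `L`:
a bijection such that it and its inverse map lines onto lines. -/
def IsCollineation (L : Set (Set P)) (α : P → P) : Prop :=
  Function.Bijective α ∧ ∀ g : Set P, g ∈ L ↔ α '' g ∈ L

section Projective

variable {K V : Type*} [Field K] [AddCommGroup V] [Module K V]

/-- The point set of the projective line through two (distinct) points of a
projective space `ℙ K V`. -/
def projLineThrough (x y : Projectivization K V) : Set (Projectivization K V) :=
  {z | z.submodule ≤ x.submodule ⊔ y.submodule}

/-- The lines of the projective space `ℙ K V`. -/
def projLines (K V : Type*) [Field K] [AddCommGroup V] [Module K V] :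
    Set (Set (Projectivization K V)) :=
  {g | ∃ x y : Projectivization K V, x ≠ y ∧ g = projLineThrough x y}

/-- The linear span of (representatives of) a set of projective points; its projective
space is the projective closure of the set, whose projective dimension is the vector
rank of this span minus one. -/
def spanOf (M : Set (Projectivization K V)) : Submodule K V := ⨆ x ∈ M, x.submodule

/-- `E` is the point set of a plane (projective dimension 2). -/
def IsPlane (E : Set (Projectivization K V)) : Prop :=
  ∃ W : Submodule K V, Module.finrank K ↥W = 3 ∧ E = {x | x.submodule ≤ W}

/-- The family of points `A` is a projective basis of the subspace of `ℙ K V`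
corresponding to the submodule `W`: the representatives are linearly independent and
span `W`. -/
def IsProjBasisOf {ι : Type*} (A : ι → Projectivization K V) (W : Submodule K V) : Prop :=
  iSupIndep (fun i => (A i).submodule) ∧ (⨆ i, (A i).submodule) = W

end Projective

section PG

variable (F : Type*) [Field F]

/-- The point set of `PG(k, F)`. -/
abbrev PGPt (k : ℕ) := Projectivization F (Fin (k + 1) → F)

/-- The line set of `PG(k, F)`. -/
abbrev PGLines (k : ℕ) := projLines F (Fin (k + 1) → F)

variable (n m : ℕ)

/-- A regular embedding `γ : ℙ₁ × ℙ₂ → ℙ̄`, where `ℙ₁ = PG(n,F)`, `ℙ₂ = PG(m,F)` and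
`ℙ̄ = PG(nm+n+m, F)`: a global injective linear map of the product such that the
projective closure of the image has (projective) dimension `nm+n+m`. -/
def IsRegularEmbedding (γ : PGPt F n × PGPt F m → PGPt F (n * m + n + m)) : Prop :=
  IsLinMap (prodLines (PGLines F n) (PGLines F m)) (PGLines F (n * m + n + m))
      (fun p => some (γ p)) ∧
  Function.Injective γ ∧
  Module.finrank F ↥(spanOf (Set.range γ)) = n * m + n + m + 1

variable {K W : Type*} [Field K] [AddCommGroup W] [Module K W]

/-- Condition (i) on `χ`, w.r.t. the basis `B` of `ℙ₂` and the plane `E ⊆ 𝒫₁`: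
for every `i = 1, …, m` the restriction of `χ` to `E × {B 0, B i}` is global and
of rank greater than `2` (i.e. the vector rank of the span of its image exceeds `3`). -/
def CondI (χ : PGPt F n × PGPt F m → Option (Projectivization K W))
    (B : Fin (m + 1) → PGPt F m) (E : Set (PGPt F n)) : Prop :=
  IsProjBasisOf B (⊤ : Submodule F (Fin (m + 1) → F)) ∧ IsPlane E ∧
  ∀ i : Fin (m + 1), i ≠ 0 →
    (∀ p ∈ E ×ˢ ({B 0, B i} : Set (PGPt F m)), χ p ≠ none) ∧
    3 < Module.rank K ↥(spanOf (mapSet χ (E ×ˢ ({B 0, B i} : Set (PGPt F m)))))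

/-- Condition (ii) on `χ`, w.r.t. the point `A ∈ 𝒫₁`: the image `({A} × 𝒫₂)χ` has
projective dimension `m` (i.e. the vector rank of the span of the image is `m + 1`). -/
def CondII (χ : PGPt F n × PGPt F m → Option (Projectivization K W))
    (A : PGPt F n) : Prop :=
  Module.rank K ↥(spanOf (mapSet χ (({A} : Set (PGPt F n)) ×ˢ (univ : Set (PGPt F m)))))
    = (m : Cardinal) + 1

/-- `ℓ₂` is a special line for the data `χ, γ, φ, α'`: it is a line of `ℙ₂` such that
(a) `({X} × ℓ₂)γφ = ({X} × ℓ₂)αχ` for every `X ∈ 𝒫₁`, and (b) the rank of `αχ`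
restricted to `𝒫₁ × ℓ₂` is greater than `1` (vector rank of the span `> 2`). -/
def SpecialLine (χ : PGPt F n × PGPt F m → Option (Projectivization K W))
    (γ : PGPt F n × PGPt F m → PGPt F (n * m + n + m))
    (φ : PGPt F (n * m + n + m) → Option (Projectivization K W))
    (α' : PGPt F m → PGPt F m) (ℓ₂ : Set (PGPt F m)) : Prop :=
  ℓ₂ ∈ PGLines F m ∧
  (∀ X : PGPt F n,
    mapSet (fun p => φ (γ p)) (({X} : Set (PGPt F n)) ×ˢ ℓ₂) =
      mapSet (fun p : PGPt F n × PGPt F m => χ (p.1, α' p.2))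
        (({X} : Set (PGPt F n)) ×ˢ ℓ₂)) ∧
  2 < Module.rank K ↥(spanOf (mapSet (fun p : PGPt F n × PGPt F m => χ (p.1, α' p.2))
        ((univ : Set (PGPt F n)) ×ˢ ℓ₂)))

end PG

end Segre


namespace Segre

section ProjAux
variable {K V : Type*} [Field K] [AddCommGroup V] [Module K V]
open Projectivization Module

lemma submodule_le_iff_eq {x y : Projectivization K V} (h : x.submodule ≤ y.submodule) :
    x = y := by
  apply Projectivization.submodule_injective
  apply Submodule.eq_of_le_of_finrank_le h
  rw [x.finrank_submodule, y.finrank_submodule]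

lemma inf_points_eq_bot {x y : Projectivization K V} (h : x ≠ y) :
    x.submodule ⊓ y.submodule = ⊥ := by
  by_contra hne
  obtain ⟨v, hv, hv0⟩ := Submodule.exists_mem_ne_zero_of_ne_bot hne
  have hx : x.submodule = Submodule.span K {v} := by
    symm
    apply Submodule.eq_of_le_of_finrank_le
    · exact (Submodule.span_singleton_le_iff_mem v _).2 hv.1
    · rw [x.finrank_submodule]
      exact Nat.one_le_iff_ne_zero.2 (by
        simp [Submodule.finrank_eq_zero (R := K) (M := V), hv0])
  have hy : y.submodule = Submodule.span K {v} := by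
    symm
    apply Submodule.eq_of_le_of_finrank_le
    · exact (Submodule.span_singleton_le_iff_mem v _).2 hv.2
    · rw [y.finrank_submodule]
      exact Nat.one_le_iff_ne_zero.2 (by
        simp [Submodule.finrank_eq_zero (R := K) (M := V), hv0])
  exact h (Projectivization.submodule_injective (hx.trans hy.symm))

lemma finrank_sup_points {x y : Projectivization K V} (h : x ≠ y) :
    finrank K ↥(x.submodule ⊔ y.submodule) = 2 := by
  have := Submodule.finrank_sup_add_finrank_inf_eq x.submodule y.submodule
  rw [inf_points_eq_bot h, finrank_bot, x.finrank_submodule, y.finrank_submodule] at this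
  omega

lemma finrank_sup_points_le (x y : Projectivization K V) :
    finrank K ↥(x.submodule ⊔ y.submodule) ≤ 2 := by
  have := Submodule.finrank_sup_add_finrank_inf_eq x.submodule y.submodule
  rw [x.finrank_submodule, y.finrank_submodule] at this
  omega

lemma mem_projLineThrough {x y z : Projectivization K V} :
    z ∈ projLineThrough x y ↔ z.submodule ≤ x.submodule ⊔ y.submodule := Iff.rfl

lemma self_mem_projLineThrough_left (x y : Projectivization K V) :
    x ∈ projLineThrough x y := mem_projLineThrough.2 le_sup_left

lemma self_mem_projLineThrough_right (x y : Projectivization K V) :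
    y ∈ projLineThrough x y := mem_projLineThrough.2 le_sup_right

lemma projLineThrough_mem_projLines {x y : Projectivization K V} (h : x ≠ y) :
    projLineThrough x y ∈ projLines K V := ⟨x, y, h, rfl⟩

/-- Uniqueness of the line through two distinct points. -/
lemma line_unique {g : Set (Projectivization K V)} (hg : g ∈ projLines K V)
    {x y : Projectivization K V} (hx : x ∈ g) (hy : y ∈ g) (hxy : x ≠ y) :
    g = projLineThrough x y := by
  obtain ⟨a, b, hab, rfl⟩ := hg
  have hsub : x.submodule ⊔ y.submodule ≤ a.submodule ⊔ b.submodule :=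
    sup_le (mem_projLineThrough.1 hx) (mem_projLineThrough.1 hy)
  have heq : x.submodule ⊔ y.submodule = a.submodule ⊔ b.submodule := by
    apply Submodule.eq_of_le_of_finrank_le hsub
    rw [finrank_sup_points hxy]
    exact finrank_sup_points_le a b
  ext z
  rw [mem_projLineThrough, mem_projLineThrough, heq]

lemma lineThru_proj {x y : Projectivization K V} (hxy : x ≠ y) :
    lineThru (projLines K V) x y = projLineThrough x y := by
  apply subset_antisymm
  · intro z hz
    simp only [lineThru, mem_iUnion, mem_sep_iff] at hz
    obtain ⟨g, ⟨⟨hg, hx, hy⟩, hzg⟩⟩ := hz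
    rwa [line_unique hg hx hy hxy] at hzg
  · intro z hz
    simp only [lineThru, mem_iUnion, mem_sep_iff]
    exact ⟨projLineThrough x y, ⟨projLineThrough_mem_projLines hxy,
      self_mem_projLineThrough_left x y, self_mem_projLineThrough_right x y⟩, hz⟩

lemma collin_proj {x y : Projectivization K V} (hxy : x ≠ y) :
    Collin (projLines K V) x y :=
  ⟨projLineThrough x y, projLineThrough_mem_projLines hxy,
    self_mem_projLineThrough_left x y, self_mem_projLineThrough_right x y⟩

end ProjAux

section SJoinAux
variable {P : Type*}

lemma sJoin_empty_left (L : Set (Set P)) (M : Set P) : sJoin L ∅ M = M := by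
  simp [sJoin]

lemma sJoin_empty_right (L : Set (Set P)) (M : Set P) : sJoin L M ∅ = M := by
  simp [sJoin]

lemma sJoin_singleton_same (L : Set (Set P)) (x : P) : sJoin L {x} {x} = {x} := by
  simp only [sJoin, union_self]
  apply subset_antisymm
  · apply union_subset (subset_refl _)
    intro z hz
    simp only [mem_iUnion, mem_singleton_iff] at hz
    obtain ⟨a, ha, b, hb, hne, _⟩ := hz
    exact absurd (ha.trans hb.symm) hne.1
  · exact subset_union_left

lemma sJoin_pair {L : Set (Set P)} {x y : P} (hxy : x ≠ y) (hc : Collin L x y) :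
    sJoin L {x} {y} = lineThru L x y := by
  obtain ⟨g, hg, hx, hy⟩ := hc
  have hxl : x ∈ lineThru L x y := by
    simp only [lineThru, mem_iUnion, mem_sep_iff]; exact ⟨g, ⟨hg, hx, hy⟩, hx⟩
  have hyl : y ∈ lineThru L x y := by
    simp only [lineThru, mem_iUnion, mem_sep_iff]; exact ⟨g, ⟨hg, hx, hy⟩, hy⟩
  apply subset_antisymm
  · refine union_subset (union_subset ?_ ?_) ?_
    on_goal 1 => intro z hz; rw [mem_singleton_iff] at hz; subst hz; exact hxl
    on_goal 1 => intro z hz; rw [mem_singleton_iff] at hz; subst hz; exact hyl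
    · intro z hz
      simp only [mem_iUnion, mem_singleton_iff] at hz
      obtain ⟨a, ha, b, hb, _, hz⟩ := hz
      subst ha; subst hb; exact hz
  · intro z hz
    apply mem_union_right
    simp only [mem_iUnion]
    exact ⟨x, rfl, y, rfl, ⟨hxy, ⟨g, hg, hx, hy⟩⟩, hz⟩

end SJoinAux

section ProjAux2
variable {K V : Type*} [Field K] [AddCommGroup V] [Module K V]

lemma sJoin_proj_points {x y : Projectivization K V} (hxy : x ≠ y) :
    sJoin (projLines K V) {x} {y} = projLineThrough x y := by
  rw [sJoin_pair hxy (collin_proj hxy), lineThru_proj hxy]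

lemma le_spanOf {S : Set (Projectivization K V)} {s : Projectivization K V} (hs : s ∈ S) :
    s.submodule ≤ spanOf S :=
  le_iSup₂ (f := fun (x : Projectivization K V) (_ : x ∈ S) => x.submodule) s hs

/-- Any element of a join of two point sets has submodule inside the span sup. -/
lemma mem_sJoin_le {S T : Set (Projectivization K V)} {z : Projectivization K V}
    (hz : z ∈ sJoin (projLines K V) S T) :
    z.submodule ≤ spanOf S ⊔ spanOf T := by
  rcases hz with (hz | hz) | hz
  · exact (le_spanOf hz).trans le_sup_left
  · exact (le_spanOf hz).trans le_sup_right
  · simp only [mem_iUnion] at hz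
    obtain ⟨a, ha, b, hb, ⟨hne, _⟩, hz⟩ := hz
    rw [lineThru_proj hne] at hz
    exact (mem_projLineThrough.1 hz).trans
      (sup_le ((le_spanOf ha).trans le_sup_left) ((le_spanOf hb).trans le_sup_right))

end ProjAux2

end Segre

namespace Segre

section MapAux
variable {P Q : Type*}

lemma ptImg_none {χ : P → Option Q} {X : P} (h : χ X = none) : ptImg χ X = ∅ := by
  ext y; simp [ptImg, h]

lemma ptImg_some {χ : P → Option Q} {X : P} {c : Q} (h : χ X = some c) :
    ptImg χ X = {c} := by
  ext y; simp [ptImg, h, eq_comm]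

lemma mem_mapSet {χ : P → Option Q} {M : Set P} {y : Q} :
    y ∈ mapSet χ M ↔ ∃ X ∈ M, χ X = some y := by
  simp [mapSet, ptImg]

end MapAux

section SpanAux
variable {K V : Type*} [Field K] [AddCommGroup V] [Module K V]

lemma spanOf_mono {S T : Set (Projectivization K V)} (h : S ⊆ T) : spanOf S ≤ spanOf T :=
  iSup₂_le fun s hs => le_spanOf (h hs)

lemma spanOf_le {S : Set (Projectivization K V)} {U : Submodule K V}
    (h : ∀ s ∈ S, Projectivization.submodule s ≤ U) : spanOf S ≤ U :=
  iSup₂_le h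

lemma spanOf_empty : spanOf (∅ : Set (Projectivization K V)) = ⊥ := by
  simp [spanOf]

lemma spanOf_singleton (c : Projectivization K V) : spanOf ({c} : Set (Projectivization K V)) = c.submodule := by
  simp [spanOf]

lemma rank_spanOf_ptImg {P : Type*} (ψ : P → Option (Projectivization K V)) (X : P) :
    Module.rank K ↥(spanOf (ptImg ψ X)) ≤ 1 := by
  cases hψ : ψ X with
  | none =>
      rw [ptImg_none hψ, spanOf_empty]
      simp
  | some c =>
      rw [ptImg_some hψ, spanOf_singleton]
      rw [← Module.finrank_eq_rank, c.finrank_submodule]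
      exact le_refl _

lemma iSup_fin_succ {k : ℕ} (f : Fin (k + 1) → Submodule K V) :
    (⨆ i, f i) = f 0 ⊔ ⨆ i : Fin k, f i.succ := by
  apply le_antisymm
  · exact iSup_le (Fin.cases le_sup_left
      (fun i => le_sup_of_le_right (le_iSup (fun i : Fin k => f i.succ) i)))
  · exact sup_le (le_iSup f 0) (iSup_le fun i => le_iSup f i.succ)

lemma rank_fin_iSup_le : ∀ (k : ℕ) (f : Fin k → Submodule K V),
    (∀ i, Module.rank K ↥(f i) ≤ 1) → Module.rank K ↥(⨆ i, f i) ≤ (k : Cardinal) := by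
  intro k
  induction k with
  | zero =>
      intro f h
      rw [iSup_of_empty]
      simp
  | succ k ih =>
      intro f h
      rw [iSup_fin_succ]
      refine le_trans (Submodule.rank_add_le_rank_add_rank _ _) ?_
      have h1 := h 0
      have h2 := ih (fun i => f i.succ) (fun i => h i.succ)
      calc Module.rank K ↥(f 0) + Module.rank K ↥(⨆ i : Fin k, f i.succ)
          ≤ 1 + (k : Cardinal) := add_le_add h1 h2
        _ = ((k + 1 : ℕ) : Cardinal) := by
            rw [Nat.cast_add, Nat.cast_one, add_comm]

end SpanAux

section ProdAux
variable {F V₁ V₂ : Type*} [Field F] [AddCommGroup V₁] [Module F V₁]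
  [AddCommGroup V₂] [Module F V₂]

lemma vert_line_mem {Y1 Y2 : Projectivization F V₂} (h : Y1 ≠ Y2) (X : Projectivization F V₁) :
    ({X} : Set (Projectivization F V₁)) ×ˢ projLineThrough Y1 Y2 ∈
      prodLines (projLines F V₁) (projLines F V₂) :=
  Or.inl ⟨X, projLineThrough Y1 Y2, projLineThrough_mem_projLines h, rfl⟩

lemma horiz_line_mem {X1 X2 : Projectivization F V₁} (h : X1 ≠ X2) (Y : Projectivization F V₂) :
    (projLineThrough X1 X2) ×ˢ ({Y} : Set (Projectivization F V₂)) ∈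
      prodLines (projLines F V₁) (projLines F V₂) :=
  Or.inr ⟨projLineThrough X1 X2, projLineThrough_mem_projLines h, Y, rfl⟩

lemma collin_vert {Y1 Y2 : Projectivization F V₂} (h : Y1 ≠ Y2) (X : Projectivization F V₁) :
    Collin (prodLines (projLines F V₁) (projLines F V₂)) (X, Y1) (X, Y2) :=
  ⟨_, vert_line_mem h X, ⟨rfl, self_mem_projLineThrough_left Y1 Y2⟩,
    ⟨rfl, self_mem_projLineThrough_right Y1 Y2⟩⟩

lemma collin_horiz {X1 X2 : Projectivization F V₁} (h : X1 ≠ X2) (Y : Projectivization F V₂) :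
    Collin (prodLines (projLines F V₁) (projLines F V₂)) (X1, Y) (X2, Y) :=
  ⟨_, horiz_line_mem h Y, ⟨self_mem_projLineThrough_left X1 X2, rfl⟩,
    ⟨self_mem_projLineThrough_right X1 X2, rfl⟩⟩

lemma lineThru_vert {Y1 Y2 : Projectivization F V₂} (h : Y1 ≠ Y2) (X : Projectivization F V₁) :
    lineThru (prodLines (projLines F V₁) (projLines F V₂)) (X, Y1) (X, Y2) =
      ({X} : Set (Projectivization F V₁)) ×ˢ projLineThrough Y1 Y2 := by
  apply subset_antisymm
  · intro z hz
    simp only [lineThru, mem_iUnion, mem_sep_iff] at hz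
    obtain ⟨g, ⟨hg, h1, h2⟩, hzg⟩ := hz
    rcases hg with ⟨X₁, g₂, hg₂, rfl⟩ | ⟨g₁, hg₁, X₂, rfl⟩
    · obtain ⟨hX1, hY1⟩ := h1
      obtain ⟨_, hY2⟩ := h2
      rw [mem_singleton_iff] at hX1
      subst hX1
      rw [line_unique hg₂ hY1 hY2 h] at hzg
      exact hzg
    · exact absurd ((h1.2).trans (h2.2).symm) h
  · intro z hz
    simp only [lineThru, mem_iUnion, mem_sep_iff]
    exact ⟨_, ⟨vert_line_mem h X, ⟨rfl, self_mem_projLineThrough_left Y1 Y2⟩,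
      ⟨rfl, self_mem_projLineThrough_right Y1 Y2⟩⟩, hz⟩

lemma lineThru_horiz {X1 X2 : Projectivization F V₁} (h : X1 ≠ X2) (Y : Projectivization F V₂) :
    lineThru (prodLines (projLines F V₁) (projLines F V₂)) (X1, Y) (X2, Y) =
      (projLineThrough X1 X2) ×ˢ ({Y} : Set (Projectivization F V₂)) := by
  apply subset_antisymm
  · intro z hz
    simp only [lineThru, mem_iUnion, mem_sep_iff] at hz
    obtain ⟨g, ⟨hg, h1, h2⟩, hzg⟩ := hz
    rcases hg with ⟨X₁, g₂, hg₂, rfl⟩ | ⟨g₁, hg₁, X₂, rfl⟩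
    · exact absurd ((h1.1).trans (h2.1).symm) h
    · obtain ⟨hX1, hY1⟩ := h1
      obtain ⟨hX2, _⟩ := h2
      rw [mem_singleton_iff] at hY1
      subst hY1
      rw [line_unique hg₁ hX1 hX2 h] at hzg
      exact hzg
  · intro z hz
    simp only [lineThru, mem_iUnion, mem_sep_iff]
    exact ⟨_, ⟨horiz_line_mem h Y, ⟨self_mem_projLineThrough_left X1 X2, rfl⟩,
      ⟨self_mem_projLineThrough_right X1 X2, rfl⟩⟩, hz⟩

lemma sJoin_prod_vert {Y1 Y2 : Projectivization F V₂} (h : Y1 ≠ Y2) (X : Projectivization F V₁) :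
    sJoin (prodLines (projLines F V₁) (projLines F V₂)) {(X, Y1)} {(X, Y2)} =
      ({X} : Set (Projectivization F V₁)) ×ˢ projLineThrough Y1 Y2 := by
  rw [sJoin_pair (fun hh => h (congrArg Prod.snd hh)) (collin_vert h X), lineThru_vert h X]

lemma sJoin_prod_horiz {X1 X2 : Projectivization F V₁} (h : X1 ≠ X2) (Y : Projectivization F V₂) :
    sJoin (prodLines (projLines F V₁) (projLines F V₂)) {(X1, Y)} {(X2, Y)} =
      (projLineThrough X1 X2) ×ˢ ({Y} : Set (Projectivization F V₂)) := by
  rw [sJoin_pair (fun hh => h (congrArg Prod.fst hh)) (collin_horiz h Y), lineThru_horiz h Y]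

end ProdAux

end Segre

namespace Segre

section LinMapAux
variable {F V₁ V₂ K W : Type*} [Field F] [AddCommGroup V₁] [Module F V₁]
  [AddCommGroup V₂] [Module F V₂] [Field K] [AddCommGroup W] [Module K W]
  {χ : Projectivization F V₁ × Projectivization F V₂ → Option (Projectivization K W)}

lemma mapSet_vert (hχ : IsLinMap (prodLines (projLines F V₁) (projLines F V₂))
      (projLines K W) χ) {Y1 Y2 : Projectivization F V₂} (h : Y1 ≠ Y2)
    (X : Projectivization F V₁) :
    mapSet χ (({X} : Set (Projectivization F V₁)) ×ˢ projLineThrough Y1 Y2) =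
      sJoin (projLines K W) (ptImg χ (X, Y1)) (ptImg χ (X, Y2)) := by
  have := hχ.1 (X, Y1) (X, Y2) (collin_vert h X)
  rwa [sJoin_prod_vert h X] at this

lemma mapSet_horiz (hχ : IsLinMap (prodLines (projLines F V₁) (projLines F V₂))
      (projLines K W) χ) {X1 X2 : Projectivization F V₁} (h : X1 ≠ X2)
    (Y : Projectivization F V₂) :
    mapSet χ ((projLineThrough X1 X2) ×ˢ ({Y} : Set (Projectivization F V₂))) =
      sJoin (projLines K W) (ptImg χ (X1, Y)) (ptImg χ (X2, Y)) := by
  have := hχ.1 (X1, Y) (X2, Y) (collin_horiz h Y)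
  rwa [sJoin_prod_horiz h Y] at this

end LinMapAux

section RepAux
variable {K V : Type*} [Field K] [AddCommGroup V] [Module K V]

lemma rep_mem_submodule (v : Projectivization K V) : v.rep ∈ v.submodule := by
  rw [Projectivization.submodule_eq]
  exact Submodule.mem_span_singleton_self _

lemma submodule_le_of_rep_mem {v : Projectivization K V} {U : Submodule K V}
    (h : v.rep ∈ U) : v.submodule ≤ U := by
  rw [Projectivization.submodule_eq]
  exact (Submodule.span_singleton_le_iff_mem _ _).2 h

end RepAux

section JoinBound
variable {F V K W : Type*} [Field F] [AddCommGroup V] [Module F V]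
  [Field K] [AddCommGroup W] [Module K W]

/-- The fundamental bound: the image of a point in the span of finitely many points
lies in the span of the images. -/
lemma joinBound (ψ : Projectivization F V → Option (Projectivization K W))
    (Hsub : ∀ x y : Projectivization F V, x ≠ y → ∀ z ∈ projLineThrough x y,
      ∀ c : Projectivization K W, ψ z = some c →
        c.submodule ≤ spanOf (ptImg ψ x) ⊔ spanOf (ptImg ψ y)) :
    ∀ (k : ℕ) (Pt : Fin k → Projectivization F V) (z : Projectivization F V),
      z.submodule ≤ (⨆ i, (Pt i).submodule) → ∀ c : Projectivization K W,
      ψ z = some c → c.submodule ≤ ⨆ i, spanOf (ptImg ψ (Pt i)) := by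
  intro k
  induction k with
  | zero =>
      intro Pt z hz c hc
      rw [iSup_of_empty] at hz
      have : z.submodule = ⊥ := le_bot_iff.1 hz
      have h1 := z.finrank_submodule
      rw [this, finrank_bot] at h1
      omega
  | succ k ih =>
      intro Pt z hz c hc
      have hz' : z.submodule ≤ (Pt 0).submodule ⊔ ⨆ i : Fin k, (Pt i.succ).submodule :=
        le_trans hz (le_of_eq (iSup_fin_succ (fun i => (Pt i).submodule)))
      have hmem : z.rep ∈ (Pt 0).submodule ⊔ ⨆ i : Fin k, (Pt i.succ).submodule :=
        hz' (rep_mem_submodule z)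
      obtain ⟨p, hp, w, hw, hpw⟩ := Submodule.mem_sup.1 hmem
      by_cases hz0 : z = Pt 0
      · subst hz0
        have : c ∈ ptImg ψ (Pt 0) := hc
        exact le_trans (le_spanOf this) (le_iSup (fun i => spanOf (ptImg ψ (Pt i))) 0)
      · have hw0 : w ≠ 0 := by
          intro h0
          apply hz0
          apply submodule_le_iff_eq
          apply submodule_le_of_rep_mem
          rw [← hpw, h0, add_zero]
          exact hp
        set Y : Projectivization F V := Projectivization.mk F w hw0 with hYdef
        have hYsub : Y.submodule = Submodule.span F {w} := Projectivization.submodule_mk w hw0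
        have hYB : Y.submodule ≤ ⨆ i : Fin k, (Pt i.succ).submodule := by
          rw [hYsub]
          exact (Submodule.span_singleton_le_iff_mem _ _).2 hw
        have hYrest : spanOf (ptImg ψ Y) ≤ ⨆ i : Fin k, spanOf (ptImg ψ (Pt i.succ)) := by
          apply spanOf_le
          intro s hs
          exact ih (fun i => Pt i.succ) Y hYB s hs
        by_cases hYP : Y = Pt 0
        · exfalso
          apply hz0
          apply submodule_le_iff_eq
          apply submodule_le_of_rep_mem
          rw [← hpw]
          apply Submodule.add_mem
          · exact hp
          · have : w ∈ Y.submodule := by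
              rw [hYsub]; exact Submodule.mem_span_singleton_self _
            rw [hYP] at this
            exact this
        · have hzline : z ∈ projLineThrough (Pt 0) Y := by
            rw [mem_projLineThrough]
            apply submodule_le_of_rep_mem
            rw [← hpw]
            apply Submodule.add_mem
            · exact Submodule.mem_sup_left hp
            · apply Submodule.mem_sup_right
              rw [hYsub]
              exact Submodule.mem_span_singleton_self _
          have hne : Pt 0 ≠ Y := fun h => hYP h.symm
          have := Hsub (Pt 0) Y hne z hzline c hc
          refine this.trans (sup_le ?_ ?_)
          · exact le_iSup (fun i => spanOf (ptImg ψ (Pt i))) 0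
          · exact hYrest.trans (iSup_le fun i =>
              le_iSup (fun j => spanOf (ptImg ψ (Pt j))) i.succ)

end JoinBound

end Segre

namespace Segre

section ChiA

open Module

variable {F : Type*} [Field F] {n m : ℕ} {K W : Type*} [Field K] [AddCommGroup W]
  [Module K W] {χ : PGPt F n × PGPt F m → Option (Projectivization K W)}

lemma chiA_global (hχ : IsLinMap (prodLines (PGLines F n) (PGLines F m)) (projLines K W) χ)
    {A : PGPt F n} (hII : CondII F n m χ A) : ∀ Y : PGPt F m, χ (A, Y) ≠ none := by
  intro Z hZ
  obtain ⟨U, hU⟩ := Submodule.exists_isCompl Z.submodule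
  have hfinU : finrank F ↥U = m := by
    have h := Submodule.finrank_add_eq_of_isCompl hU
    rw [Z.finrank_submodule, Module.finrank_fin_fun] at h
    omega
  let b : Basis (Fin m) F ↥U := Module.finBasisOfFinrankEq F ↥U hfinU
  have hbne : ∀ i, ((b i : ↥U) : Fin (m + 1) → F) ≠ 0 := by
    intro i h0
    exact b.ne_zero i (Subtype.coe_injective (by simpa using h0))
  let Pt : Fin m → PGPt F m := fun i => Projectivization.mk F ((b i : ↥U) : Fin (m + 1) → F)
    (hbne i)
  have hPtdef : ∀ i, (Pt i).submodule = Submodule.span F {((b i : ↥U) : Fin (m + 1) → F)} :=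
    fun i => Projectivization.submodule_mk _ _
  have hPt : (⨆ i, (Pt i).submodule) = U := by
    calc (⨆ i, (Pt i).submodule)
        = ⨆ i, Submodule.span F {((b i : ↥U) : Fin (m + 1) → F)} := by
          exact iSup_congr hPtdef
      _ = Submodule.span F (Set.range fun i => ((b i : ↥U) : Fin (m + 1) → F)) :=
          Submodule.span_range_eq_iSup.symm
      _ = Submodule.map U.subtype (Submodule.span F (Set.range b)) := by
          rw [Submodule.map_span]
          congr 1
          rw [← Set.range_comp]
          rfl
      _ = U := by rw [b.span_eq, Submodule.map_subtype_top]
  set ψ : PGPt F m → Option (Projectivization K W) := fun Y => χ (A, Y) with hψ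
  have Hsub : ∀ x y : PGPt F m, x ≠ y → ∀ z ∈ projLineThrough x y,
      ∀ c : Projectivization K W, ψ z = some c →
        c.submodule ≤ spanOf (ptImg ψ x) ⊔ spanOf (ptImg ψ y) := by
    intro x y hxy z hz c hc
    have hmem : c ∈ mapSet χ (({A} : Set (PGPt F n)) ×ˢ projLineThrough x y) :=
      mem_mapSet.2 ⟨(A, z), ⟨rfl, hz⟩, hc⟩
    rw [mapSet_vert hχ hxy A] at hmem
    exact mem_sJoin_le hmem
  have claim : ∀ (Y : PGPt F m) (c : Projectivization K W), χ (A, Y) = some c →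
      c.submodule ≤ ⨆ i, spanOf (ptImg ψ (Pt i)) := by
    intro Y c hc
    have hYZ : Y ≠ Z := by
      rintro rfl
      rw [hZ] at hc
      exact Option.some_ne_none c hc.symm
    have hrepmem : Y.rep ∈ Z.submodule ⊔ U := by
      rw [hU.codisjoint.eq_top]
      trivial
    obtain ⟨p, hp, w, hw, hpw⟩ := Submodule.mem_sup.1 hrepmem
    have hw0 : w ≠ 0 := by
      intro h0
      apply hYZ
      apply submodule_le_iff_eq
      apply submodule_le_of_rep_mem
      rw [← hpw, h0, add_zero]
      exact hp
    set Ys : PGPt F m := Projectivization.mk F w hw0 with hYsdef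
    have hYssub : Ys.submodule = Submodule.span F {w} := Projectivization.submodule_mk _ _
    have hYsU : Ys.submodule ≤ U := by
      rw [hYssub]
      exact (Submodule.span_singleton_le_iff_mem _ _).2 hw
    by_cases hYY : Y = Ys
    · refine joinBound ψ Hsub m Pt Y ?_ c hc
      rw [hPt, hYY]
      exact hYsU
    · have hZYs : Z ≠ Ys := by
        intro h
        have hle : Z.submodule ≤ Z.submodule ⊓ U := le_inf le_rfl (h ▸ hYsU)
        rw [hU.disjoint.eq_bot] at hle
        have h1 := Z.finrank_submodule
        rw [le_bot_iff.1 hle, finrank_bot] at h1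
        omega
      have hsupeq : Z.submodule ⊔ Y.submodule = Z.submodule ⊔ Ys.submodule := by
        apply le_antisymm
        · refine sup_le le_sup_left ?_
          apply submodule_le_of_rep_mem
          rw [← hpw]
          exact Submodule.add_mem _ (Submodule.mem_sup_left hp)
            (Submodule.mem_sup_right (hYssub ▸ Submodule.mem_span_singleton_self w))
        · refine sup_le le_sup_left ?_
          rw [hYssub]
          refine (Submodule.span_singleton_le_iff_mem _ _).2 ?_
          have : w = Y.rep - p := by rw [← hpw]; ring
          rw [this]
          exact Submodule.sub_mem _ (Submodule.mem_sup_right (rep_mem_submodule Y))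
            (Submodule.mem_sup_left hp)
      have hline : projLineThrough Z Y = projLineThrough Z Ys := by
        ext t
        rw [mem_projLineThrough, mem_projLineThrough, hsupeq]
      have e1 := mapSet_vert hχ (Ne.symm hYZ) A
      rw [ptImg_none (show χ (A, Z) = none from hZ), sJoin_empty_left] at e1
      have e2 := mapSet_vert hχ hZYs A
      rw [ptImg_none (show χ (A, Z) = none from hZ), sJoin_empty_left] at e2
      have himg : ptImg χ (A, Y) = ptImg χ (A, Ys) := by
        rw [← e1, hline, e2]
      have hc' : χ (A, Ys) = some c := by
        have hcY : c ∈ ptImg χ (A, Y) := hc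
        rw [himg] at hcY
        exact hcY
      refine joinBound ψ Hsub m Pt Ys ?_ c hc'
      rw [hPt]
      exact hYsU
  have hlespan : spanOf (mapSet χ (({A} : Set (PGPt F n)) ×ˢ (Set.univ : Set (PGPt F m)))) ≤
      ⨆ i, spanOf (ptImg ψ (Pt i)) := by
    apply spanOf_le
    intro s hs
    obtain ⟨q, hq, hqs⟩ := mem_mapSet.1 hs
    obtain ⟨hq1, -⟩ := hq
    obtain ⟨q1, q2⟩ := q
    rw [Set.mem_singleton_iff] at hq1
    subst hq1
    exact claim q2 s hqs
  have hII' : Module.rank K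
      ↥(spanOf (mapSet χ (({A} : Set (PGPt F n)) ×ˢ (Set.univ : Set (PGPt F m)))))
      = (m : Cardinal) + 1 := hII
  have hrank1 := Submodule.rank_mono hlespan
  rw [hII'] at hrank1
  have hrank2 := rank_fin_iSup_le m (fun i => spanOf (ptImg ψ (Pt i)))
    (fun i => rank_spanOf_ptImg ψ (Pt i))
  have hfinal : ((m : ℕ) + 1 : Cardinal) ≤ ((m : ℕ) : Cardinal) := hrank1.trans hrank2
  have : ((m + 1 : ℕ) : Cardinal) ≤ ((m : ℕ) : Cardinal) := by push_cast; exact hfinal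
  have := Nat.cast_le.1 this
  omega

end ChiA

end Segre

namespace Segre

section ChiA2

open Module

variable {F : Type*} [Field F] {n m : ℕ} {K W : Type*} [Field K] [AddCommGroup W]
  [Module K W] {χ : PGPt F n × PGPt F m → Option (Projectivization K W)}

lemma chiA_inj (hχ : IsLinMap (prodLines (PGLines F n) (PGLines F m)) (projLines K W) χ)
    {A : PGPt F n} (hglob : ∀ Y : PGPt F m, χ (A, Y) ≠ none)
    {Y1 Y2 : PGPt F m} (h : χ (A, Y1) = χ (A, Y2)) : Y1 = Y2 := by
  by_contra hne
  obtain ⟨Zt, hZt, hZnone⟩ := hχ.2 (A, Y1) (A, Y2) (collin_vert hne A)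
    (fun hh => hne (congrArg Prod.snd hh)) (by rw [ptImg, ptImg, h])
  rw [lineThru_vert hne A] at hZt
  obtain ⟨z1, z2⟩ := Zt
  obtain ⟨h1, -⟩ := hZt
  rw [Set.mem_singleton_iff] at h1
  subst h1
  exact hglob z2 hZnone

lemma plane_rank (hχ : IsLinMap (prodLines (PGLines F n) (PGLines F m)) (projLines K W) χ)
    {E : Set (PGPt F n)} (hE : IsPlane E) {C : PGPt F m}
    (hglob : ∀ X ∈ E, χ (X, C) ≠ none) :
    2 < Module.rank K ↥(spanOf (mapSet χ (E ×ˢ ({C} : Set (PGPt F m))))) := by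
  obtain ⟨W₀, hW3, hEdef⟩ := hE
  let b : Basis (Fin 3) F ↥W₀ := Module.finBasisOfFinrankEq F ↥W₀ hW3
  have hbne : ∀ t, ((b t : ↥W₀) : Fin (n + 1) → F) ≠ 0 := fun t h0 =>
    b.ne_zero t (Subtype.coe_injective (by simpa using h0))
  let P : Fin 3 → PGPt F n := fun t => Projectivization.mk F ((b t : ↥W₀) : Fin (n + 1) → F)
    (hbne t)
  have hPsub : ∀ t, (P t).submodule = Submodule.span F {((b t : ↥W₀) : Fin (n + 1) → F)} :=
    fun t => Projectivization.submodule_mk _ _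
  have hPmem : ∀ t, P t ∈ E := by
    intro t
    rw [hEdef]
    show (P t).submodule ≤ W₀
    rw [hPsub]
    exact (Submodule.span_singleton_le_iff_mem _ _).2 (b t).2
  have hEsub : ∀ x ∈ E, Projectivization.submodule x ≤ W₀ := by
    intro x hx
    rw [hEdef] at hx
    exact hx
  have hlindep : LinearIndependent F (fun t => ((b t : ↥W₀) : Fin (n + 1) → F)) :=
    b.linearIndependent.map' W₀.subtype (Submodule.ker_subtype W₀)
  have hPne : ∀ s t : Fin 3, s ≠ t → P s ≠ P t := by
    intro s t hst heq
    have hsub : (P s).submodule = (P t).submodule := congrArg _ heq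
    rw [hPsub, hPsub] at hsub
    have hmem : ((b s : ↥W₀) : Fin (n + 1) → F) ∈
        Submodule.span F ((fun i => ((b i : ↥W₀) : Fin (n + 1) → F)) '' {t}) := by
      rw [Set.image_singleton, ← hsub]
      exact Submodule.mem_span_singleton_self _
    exact hlindep.notMem_span_image (by simpa using hst) hmem
  have hInj : ∀ x ∈ E, ∀ y ∈ E, χ (x, C) = χ (y, C) → x = y := by
    intro x hx y hy hxy
    by_contra hne
    obtain ⟨Zt, hZt, hZnone⟩ := hχ.2 (x, C) (y, C) (collin_horiz hne C)
      (fun hh => hne (congrArg Prod.fst hh)) (by rw [ptImg, ptImg, hxy])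
    rw [lineThru_horiz hne C] at hZt
    obtain ⟨z1, z2⟩ := Zt
    obtain ⟨h1, h2⟩ := hZt
    rw [Set.mem_singleton_iff] at h2
    subst h2
    apply hglob z1 _ hZnone
    rw [hEdef]
    exact (mem_projLineThrough.1 h1).trans (sup_le (hEsub x hx) (hEsub y hy))
  by_contra h2
  rw [not_lt] at h2
  set S := spanOf (mapSet χ (E ×ˢ ({C} : Set (PGPt F m)))) with hSdef
  have himg : ∀ t : Fin 3, ∃ c : Projectivization K W, χ (P t, C) = some c := by
    intro t
    cases hc : χ (P t, C) with
    | none => exact absurd hc (hglob _ (hPmem t))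
    | some c => exact ⟨c, rfl⟩
  obtain ⟨c0, hc0⟩ := himg 0
  obtain ⟨c1, hc1⟩ := himg 1
  obtain ⟨c2, hc2⟩ := himg 2
  have hcS : ∀ (t : Fin 3) (c : Projectivization K W), χ (P t, C) = some c →
      c.submodule ≤ S := by
    intro t c hc
    exact le_spanOf (mem_mapSet.2 ⟨(P t, C), ⟨hPmem t, rfl⟩, hc⟩)
  have hcne : ∀ (s t : Fin 3), s ≠ t → ∀ cs ct, χ (P s, C) = some cs →
      χ (P t, C) = some ct → cs ≠ ct := by
    intro s t hst cs ct hcs hct hee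
    exact hPne s t hst (hInj _ (hPmem s) _ (hPmem t) (by rw [hcs, hct, hee]))
  have hc01 : c0 ≠ c1 := hcne 0 1 (by decide) _ _ hc0 hc1
  have hc02 : c0 ≠ c2 := hcne 0 2 (by decide) _ _ hc0 hc2
  haveI : Module.Finite K ↥S := by
    apply Module.rank_lt_aleph0_iff.1
    exact lt_of_le_of_lt h2 (by exact_mod_cast Cardinal.nat_lt_aleph0 2)
  have hfinS : finrank K ↥S ≤ 2 := finrank_le_of_rank_le (by exact_mod_cast h2)
  have hsup01 : c0.submodule ⊔ c1.submodule = S := by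
    apply Submodule.eq_of_le_of_finrank_le (sup_le (hcS 0 c0 hc0) (hcS 1 c1 hc1))
    rw [finrank_sup_points hc01]
    exact hfinS
  have hsup02 : c0.submodule ⊔ c2.submodule = S := by
    apply Submodule.eq_of_le_of_finrank_le (sup_le (hcS 0 c0 hc0) (hcS 2 c2 hc2))
    rw [finrank_sup_points hc02]
    exact hfinS
  have hmem1 : c1 ∈ mapSet χ ((projLineThrough (P 0) (P 2)) ×ˢ ({C} : Set (PGPt F m))) := by
    rw [mapSet_horiz hχ (hPne 0 2 (by decide)) C, ptImg_some hc0, ptImg_some hc2,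
      sJoin_proj_points hc02, mem_projLineThrough, hsup02]
    exact hcS 1 c1 hc1
  obtain ⟨q, hq, hqc⟩ := mem_mapSet.1 hmem1
  obtain ⟨q1, q2⟩ := q
  obtain ⟨hq1, hq2⟩ := hq
  rw [Set.mem_singleton_iff] at hq2
  subst hq2
  have hq1E : q1 ∈ E := by
    rw [hEdef]
    exact (mem_projLineThrough.1 hq1).trans
      (sup_le (hEsub _ (hPmem 0)) (hEsub _ (hPmem 2)))
  have : q1 = P 1 := hInj _ hq1E _ (hPmem 1) (by rw [hqc, hc1])
  subst this
  have hsle : (P 1).submodule ≤ (P 0).submodule ⊔ (P 2).submodule :=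
    mem_projLineThrough.1 hq1
  have hmem : ((b 1 : ↥W₀) : Fin (n + 1) → F) ∈
      Submodule.span F ((fun i => ((b i : ↥W₀) : Fin (n + 1) → F)) '' {0, 2}) := by
    have h1 : ((b 1 : ↥W₀) : Fin (n + 1) → F) ∈ (P 1).submodule := by
      rw [hPsub]
      exact Submodule.mem_span_singleton_self _
    have h2 := hsle h1
    rw [hPsub, hPsub, ← Submodule.span_union, Set.singleton_union] at h2
    rw [Set.image_pair]
    exact h2
  exact hlindep.notMem_span_image (by decide) hmem

end ChiA2

end Segre
open Segre Set in
/-- Proposition `speciale`: every line of `ℙ₂` containing two points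
of the basis `𝓑` is a special line. -/
theorem statement_10 (F : Type*) [Field F] (n m : ℕ) (hn : 2 ≤ n) (hm : 1 ≤ m)
    (K W : Type*) [Field K] [AddCommGroup W] [Module K W]
    (χ : PGPt F n × PGPt F m → Option (Projectivization K W))
    (hχ : IsLinMap (prodLines (PGLines F n) (PGLines F m)) (projLines K W) χ)
    (B : Fin (m + 1) → PGPt F m) (E : Set (PGPt F n)) (hI : CondI F n m χ B E)
    (A : PGPt F n) (hII : CondII F n m χ A)
    (γ : PGPt F n × PGPt F m → PGPt F (n * m + n + m))
    (hγ : IsRegularEmbedding F n m γ)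
    -- `φ` is a linear map extending `(γ⁻¹χ)` restricted to `(𝒫₁ × 𝓑)γ`
    (φ : PGPt F (n * m + n + m) → Option (Projectivization K W))
    (hφ : IsLinMap (PGLines F (n * m + n + m)) (projLines K W) φ)
    (hext : ∀ (X : PGPt F n) (i : Fin (m + 1)), φ (γ (X, B i)) = χ (X, B i))
    -- `α'` is the collineation of `ℙ₂` with `(A, Xα')χ = (A, X)γφ` for all `X`
    (α' : PGPt F m → PGPt F m) (hα' : IsCollineation (PGLines F m) α')
    (hdef : ∀ X : PGPt F m, χ (A, α' X) = φ (γ (A, X))) :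
    ∀ ℓ₂ ∈ PGLines F m, ∀ i j : Fin (m + 1),
      B i ≠ B j → B i ∈ ℓ₂ → B j ∈ ℓ₂ → SpecialLine F n m χ γ φ α' ℓ₂ := by
  intro ℓ₂ hℓ₂ i j hBij hBi hBj
  have hglobA : ∀ Y : PGPt F m, χ (A, Y) ≠ none := chiA_global hχ hII
  have hinjA : ∀ {Y1 Y2 : PGPt F m}, χ (A, Y1) = χ (A, Y2) → Y1 = Y2 :=
    fun h => chiA_inj hχ hglobA h
  have hfix : ∀ k : Fin (m + 1), α' (B k) = B k := by
    intro k
    apply hinjA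
    rw [hdef (B k), hext A k]
  have hl2 : ℓ₂ = projLineThrough (B i) (B j) := line_unique hℓ₂ hBi hBj hBij
  have himg : α' '' ℓ₂ = ℓ₂ := by
    have hmem := (hα'.2 ℓ₂).1 hℓ₂
    have h1 : B i ∈ α' '' ℓ₂ := ⟨B i, hBi, hfix i⟩
    have h2 : B j ∈ α' '' ℓ₂ := ⟨B j, hBj, hfix j⟩
    rw [line_unique hmem h1 h2 hBij, ← hl2]
  have hR : ∀ M : Set (PGPt F n × PGPt F m), (∀ p : PGPt F n × PGPt F m, p ∈ M →
        ∀ q : PGPt F m, (p.1, q) ∈ M ↔ q ∈ ℓ₂) → True := fun _ _ => trivial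
  refine ⟨hℓ₂, ?_, ?_⟩
  · -- (a)
    intro X
    have hinj := hγ.2.1
    have hne2 : γ (X, B i) ≠ γ (X, B j) :=
      fun h => hBij (congrArg Prod.snd (hinj h))
    -- RHS
    have hRHS : mapSet (fun p : PGPt F n × PGPt F m => χ (p.1, α' p.2))
        (({X} : Set (PGPt F n)) ×ˢ ℓ₂) = mapSet χ (({X} : Set (PGPt F n)) ×ˢ ℓ₂) := by
      ext y
      simp only [mem_mapSet]
      constructor
      · rintro ⟨⟨p1, p2⟩, ⟨hp1, hp2⟩, hc⟩
        rw [Set.mem_singleton_iff] at hp1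
        subst hp1
        refine ⟨(p1, α' p2), ⟨rfl, ?_⟩, hc⟩
        rw [← himg]
        exact ⟨p2, hp2, rfl⟩
      · rintro ⟨⟨p1, p2⟩, ⟨hp1, hp2⟩, hc⟩
        rw [Set.mem_singleton_iff] at hp1
        subst hp1
        rw [← himg] at hp2
        obtain ⟨q, hq, rfl⟩ := hp2
        exact ⟨(p1, q), ⟨rfl, hq⟩, hc⟩
    have hRr : mapSet χ (({X} : Set (PGPt F n)) ×ˢ ℓ₂) =
        sJoin (projLines K W) (ptImg χ (X, B i)) (ptImg χ (X, B j)) := by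
      rw [hl2]
      exact mapSet_vert hχ hBij X
    -- LHS
    have hL1 : mapSet (fun p : PGPt F n × PGPt F m => φ (γ p))
        (({X} : Set (PGPt F n)) ×ˢ ℓ₂) =
        mapSet φ (γ '' (({X} : Set (PGPt F n)) ×ˢ ℓ₂)) := by
      ext y
      simp only [mem_mapSet]
      constructor
      · rintro ⟨p, hp, hc⟩
        exact ⟨γ p, ⟨p, hp, rfl⟩, hc⟩
      · rintro ⟨q, ⟨p, hp, rfl⟩, hc⟩
        exact ⟨p, hp, hc⟩
    have hγmap : γ '' (({X} : Set (PGPt F n)) ×ˢ ℓ₂) =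
        projLineThrough (γ (X, B i)) (γ (X, B j)) := by
      have hlm := hγ.1.1 (X, B i) (X, B j) (collin_vert hBij X)
      rw [sJoin_prod_vert hBij X] at hlm
      have hp1 : ptImg (fun p : PGPt F n × PGPt F m => some (γ p)) (X, B i) =
          {γ (X, B i)} := ptImg_some rfl
      have hp2 : ptImg (fun p : PGPt F n × PGPt F m => some (γ p)) (X, B j) =
          {γ (X, B j)} := ptImg_some rfl
      rw [hp1, hp2, sJoin_proj_points hne2, ← hl2] at hlm
      rw [← hlm]
      ext y
      simp only [Set.mem_image, mem_mapSet]
      constructor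
      · rintro ⟨p, hp, rfl⟩
        exact ⟨p, hp, rfl⟩
      · rintro ⟨p, hp, hc⟩
        exact ⟨p, hp, Option.some_injective _ hc⟩
    have hφline : mapSet φ (projLineThrough (γ (X, B i)) (γ (X, B j))) =
        sJoin (projLines K W) (ptImg φ (γ (X, B i))) (ptImg φ (γ (X, B j))) := by
      have h := hφ.1 _ _ (collin_proj hne2)
      rwa [sJoin_proj_points hne2] at h
    have hpt1 : ptImg φ (γ (X, B i)) = ptImg χ (X, B i) := by
      unfold ptImg
      rw [hext X i]
    have hpt2 : ptImg φ (γ (X, B j)) = ptImg χ (X, B j) := by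
      unfold ptImg
      rw [hext X j]
    rw [hL1, hγmap, hφline, hpt1, hpt2, hRHS, hRr]
  · -- (b)
    have hk : ∃ k : Fin (m + 1), k ≠ 0 ∧ B k ∈ ℓ₂ := by
      by_cases hi : i = 0
      · exact ⟨j, fun hj0 => hBij (by rw [hi, hj0]), hBj⟩
      · exact ⟨i, hi, hBi⟩
    obtain ⟨k, hk0, hkl⟩ := hk
    obtain ⟨hbasis, hplane, hcond⟩ := hI
    have hglobk : ∀ X ∈ E, χ (X, B k) ≠ none := by
      intro X hX
      exact (hcond k hk0).1 (X, B k) ⟨hX, by simp⟩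
    have hpr := plane_rank hχ hplane hglobk
    have hsubset : mapSet χ (E ×ˢ ({B k} : Set (PGPt F m))) ⊆
        mapSet (fun p : PGPt F n × PGPt F m => χ (p.1, α' p.2))
          ((Set.univ : Set (PGPt F n)) ×ˢ ℓ₂) := by
      intro y hy
      obtain ⟨⟨p1, p2⟩, ⟨hp1, hp2⟩, hc⟩ := mem_mapSet.1 hy
      rw [Set.mem_singleton_iff] at hp2
      subst hp2
      refine mem_mapSet.2 ⟨(p1, B k), ⟨trivial, hkl⟩, ?_⟩
      show χ (p1, α' (B k)) = some y
      rw [hfix k]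
      exact hc
    exact lt_of_lt_of_le hpr (Submodule.rank_mono (spanOf_mono hsubset))
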